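/- Let n ∈ ℕ with n ≥ 1, let i, j be indices in {1,…,n}, and let u > 0. Then ∫₀ᵘ (1 − e^{−4πv})^{−n} · (1 − e^{−4π(u−v)})^{−n} · (∫_{ℂⁿ} |Z_i|²·|Z_j|² · exp(−(B_{2v} + B_{2(u−v)})·‖Z‖²) dZ) dv = 2^{δ_{ij}} · (π²·(1 − e^{−4πu})^{n+2})^{−1} · (u·(1 + 4e^{−4πu} + e^{−8πu}) − (3/(4π))·(1 − e^{−8πu})), where δ_{ij} = 1 if i = j and δ_{ij} = 0 otherwise. -/

import Mathlib

open Real MeasureTheory intervalIntegral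

noncomputable instance (n : ℕ) : MeasurableSpace (EuclideanSpace ℂ (Fin n)) := borel _
instance (n : ℕ) : BorelSpace (EuclideanSpace ℂ (Fin n)) := ⟨rfl⟩

noncomputable def Teq (n : ℕ) : EuclideanSpace ℂ (Fin n) ≃ᵐ (Fin n → ℂ) :=
  (PiLp.continuousLinearEquiv 2 ℂ (fun _ : Fin n => ℂ)).toHomeomorph.toMeasurableEquiv

lemma Teq_apply (n : ℕ) (Z : EuclideanSpace ℂ (Fin n)) (k : Fin n) : Teq n Z k = Z k := rfl

lemma norm_sq_eq_sum_cn (n : ℕ) (Z : EuclideanSpace ℂ (Fin n)) :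
    ‖Z‖ ^ 2 = ∑ k, ‖Z k‖ ^ 2 := by
  rw [EuclideanSpace.norm_eq, Real.sq_sqrt]
  positivity

lemma integral_gaussian_Cn (n : ℕ) :
    ∫ Z : EuclideanSpace ℂ (Fin n), rexp (-(π * ‖Z‖ ^ 2)) = 1 := by
  set E := EuclideanSpace ℂ (Fin n)
  set b := stdOrthonormalBasis ℝ E
  set d := Module.finrank ℝ E
  have h1 := b.measurePreserving_measurableEquiv
  have h2 := EuclideanSpace.volume_preserving_symm_measurableEquiv_toLp (ι := Fin d)
  have key : ∀ x : EuclideanSpace ℝ (Fin d), rexp (-(π * ‖x‖ ^ 2)) =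
      ∏ k, rexp (-(π * (x k) ^ 2)) := by
    intro x
    rw [← Real.exp_sum]
    congr 1
    rw [EuclideanSpace.norm_eq, Real.sq_sqrt (by positivity)]
    simp [Finset.mul_sum]
  calc ∫ Z : E, rexp (-(π * ‖Z‖ ^ 2))
      = ∫ Z : E, rexp (-(π * ‖b.measurableEquiv Z‖ ^ 2)) := by
        congr 1; ext Z
        have : ‖b.measurableEquiv Z‖ = ‖Z‖ := b.repr.norm_map Z
        rw [this]
    _ = ∫ x : EuclideanSpace ℝ (Fin d), rexp (-(π * ‖x‖ ^ 2)) :=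
        h1.integral_comp' (fun x => rexp (-(π * ‖x‖ ^ 2)))
    _ = ∫ x : EuclideanSpace ℝ (Fin d),
          ∏ k, rexp (-(π * ((MeasurableEquiv.toLp 2 (Fin d → ℝ)).symm x k) ^ 2)) := by
        congr 1; ext x
        rw [key x]
        rfl
    _ = ∫ y : Fin d → ℝ, ∏ k, rexp (-(π * (y k) ^ 2)) := h2.integral_comp' (fun y => ∏ k, rexp (-(π * (y k) ^ 2)))
    _ = (∫ t : ℝ, rexp (-(π * t ^ 2))) ^ Fintype.card (Fin d) :=
        integral_fintype_prod_eq_pow (fun t => rexp (-(π * t ^ 2)))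
    _ = 1 := by
        simp_rw [neg_mul_eq_neg_mul]
        rw [integral_gaussian, div_self Real.pi_ne_zero, Real.sqrt_one, one_pow]

lemma complex_moment' {c : ℝ} (hc : 0 < c) (m : ℕ) :
    ∫ z : ℂ, ‖z‖ ^ (2 * m) * Real.exp (-(c * ‖z‖ ^ 2)) = π * m.factorial / c ^ (m + 1) := by
  have hq : (-2 : ℝ) < (2 * m : ℕ) := by
    have : (0:ℝ) ≤ (2 * m : ℕ) := Nat.cast_nonneg _
    linarith
  have h := Complex.integral_rpow_mul_exp_neg_mul_rpow (p := 2) (q := (2 * m : ℕ))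
    one_le_two hq hc
  have h2 : ∀ z : ℂ, ‖z‖ ^ ((2 * m : ℕ) : ℝ) * rexp (-c * ‖z‖ ^ (2 : ℝ)) =
      ‖z‖ ^ (2 * m) * Real.exp (-(c * ‖z‖ ^ 2)) := by
    intro z
    rw [Real.rpow_natCast, show (2 : ℝ) = ((2 : ℕ) : ℝ) by norm_num, Real.rpow_natCast, neg_mul]
  simp_rw [h2] at h
  rw [h]
  have h3 : (((2 * m : ℕ) : ℝ) + 2) / 2 = (m : ℝ) + 1 := by push_cast; ring
  rw [h3, Real.Gamma_nat_eq_factorial,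
    show (-(((2 * m : ℕ) : ℝ) + 2) / 2) = -(((m + 1 : ℕ)) : ℝ) by push_cast; ring,
    Real.rpow_neg hc.le, Real.rpow_natCast]
  have hcn : (c:ℝ) ^ (m+1) ≠ 0 := by positivity
  field_simp

lemma integral_gaussian_c : ∫ z : ℂ, rexp (-(π * ‖z‖ ^ 2)) = 1 := by
  have := complex_moment' Real.pi_pos 0
  simpa [div_self Real.pi_ne_zero] using this

lemma Teq_measurePreserving (n : ℕ) : MeasurePreserving (Teq n) volume volume := by
  refine ⟨(Teq n).measurable, ?_⟩
  haveI : Measure.IsAddHaarMeasure (volume : Measure (EuclideanSpace ℂ (Fin n))) := by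
    rw [← (stdOrthonormalBasis ℝ (EuclideanSpace ℂ (Fin n))).addHaar_eq_volume]
    infer_instance
  set μ' : Measure (Fin n → ℂ) := Measure.map (Teq n) volume with hμ'
  haveI : Measure.IsAddHaarMeasure μ' := by
    have : μ' = Measure.map (PiLp.continuousLinearEquiv 2 ℂ (fun _ : Fin n => ℂ)) volume := rfl
    rw [this]
    infer_instance
  have hsmul := Measure.isAddLeftInvariant_eq_smul (volume : Measure (Fin n → ℂ)) μ'
  -- compute the Gaussian integral for both measures
  set G : (Fin n → ℂ) → ℝ := fun w => ∏ k, rexp (-(π * ‖w k‖ ^ 2)) with hG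
  have hGμ' : ∫ w, G w ∂μ' = 1 := by
    rw [hμ', integral_map_equiv]
    have : ∀ Z : EuclideanSpace ℂ (Fin n), G (Teq n Z) = rexp (-(π * ‖Z‖ ^ 2)) := by
      intro Z
      rw [hG]
      simp only [Teq_apply]
      rw [← Real.exp_sum]
      congr 1
      rw [norm_sq_eq_sum_cn, Finset.mul_sum]
      simp
    simp_rw [this]
    exact integral_gaussian_Cn n
  have hGpi : ∫ w : Fin n → ℂ, G w = 1 := by
    rw [hG]
    exact (integral_fintype_prod_eq_pow (fun z : ℂ => rexp (-(π * ‖z‖ ^ 2)))).trans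
      (by rw [integral_gaussian_c, one_pow])
  have h1 : (1 : ℝ) = (Measure.addHaarScalarFactor (volume : Measure (Fin n → ℂ)) μ' : ℝ) := by
    calc (1:ℝ) = ∫ w : Fin n → ℂ, G w := hGpi.symm
      _ = ∫ w, G w ∂((Measure.addHaarScalarFactor (volume : Measure (Fin n → ℂ)) μ') • μ') := by
          rw [← hsmul]
      _ = (Measure.addHaarScalarFactor (volume : Measure (Fin n → ℂ)) μ' : ℝ) := by
          rw [integral_smul_nnreal_measure, hGμ']
          rw [NNReal.smul_def, smul_eq_mul, mul_one]
  have h2 : Measure.addHaarScalarFactor (volume : Measure (Fin n → ℂ)) μ' = 1 := by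
    exact NNReal.coe_eq_one.mp h1.symm
  rw [h2, one_smul] at hsmul
  exact hsmul.symm

lemma inner_integral (n : ℕ) (hn : 1 ≤ n) (i j : Fin n) {c : ℝ} (hc : 0 < c) :
    ∫ Z : EuclideanSpace ℂ (Fin n), ‖Z i‖ ^ 2 * ‖Z j‖ ^ 2 * rexp (-(c * ‖Z‖ ^ 2))
      = (2 : ℝ) ^ (if i = j then 1 else 0 : ℕ) * π ^ n / c ^ (n + 2) := by
  classical
  set g : Fin n → ℂ → ℝ := fun k z =>
    (if k = i then ‖z‖ ^ 2 else 1) * (if k = j then ‖z‖ ^ 2 else 1) * rexp (-(c * ‖z‖ ^ 2))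
    with hg
  have key : ∀ Z : EuclideanSpace ℂ (Fin n),
      ‖Z i‖ ^ 2 * ‖Z j‖ ^ 2 * rexp (-(c * ‖Z‖ ^ 2)) = ∏ k, g k (Teq n Z k) := by
    intro Z
    simp only [Teq_apply, hg]
    rw [Finset.prod_mul_distrib, Finset.prod_mul_distrib,
      Finset.prod_ite_eq' Finset.univ i (fun k => ‖Z k‖ ^ 2),
      Finset.prod_ite_eq' Finset.univ j (fun k => ‖Z k‖ ^ 2),
      if_pos (Finset.mem_univ i), if_pos (Finset.mem_univ j), ← Real.exp_sum]
    congr 2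
    rw [norm_sq_eq_sum_cn]
    rw [Finset.mul_sum, ← Finset.sum_neg_distrib]
  have step1 : ∫ Z : EuclideanSpace ℂ (Fin n), ‖Z i‖ ^ 2 * ‖Z j‖ ^ 2 * rexp (-(c * ‖Z‖ ^ 2))
      = ∏ k, ∫ z : ℂ, g k z := by
    calc ∫ Z : EuclideanSpace ℂ (Fin n), ‖Z i‖ ^ 2 * ‖Z j‖ ^ 2 * rexp (-(c * ‖Z‖ ^ 2))
        = ∫ Z : EuclideanSpace ℂ (Fin n), ∏ k, g k (Teq n Z k) := by
          congr 1; ext Z; exact key Z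
      _ = ∫ w : Fin n → ℂ, ∏ k, g k (w k) :=
          (Teq_measurePreserving n).integral_comp' (fun w => ∏ k, g k (w k))
      _ = ∏ k, ∫ z : ℂ, g k z := integral_fintype_prod_eq_prod g
  have hm0 : ∫ z : ℂ, rexp (-(c * ‖z‖ ^ 2)) = π / c := by
    have := complex_moment' hc 0
    simpa [div_self hc.ne'] using this
  have hm1 : ∫ z : ℂ, ‖z‖ ^ 2 * rexp (-(c * ‖z‖ ^ 2)) = π / c ^ 2 := by
    have := complex_moment' hc 1
    simpa using this
  have hm2 : ∫ z : ℂ, ‖z‖ ^ 2 * ‖z‖ ^ 2 * rexp (-(c * ‖z‖ ^ 2)) = 2 * π / c ^ 3 := by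
    have := complex_moment' hc 2
    have h4 : ∀ z : ℂ, ‖z‖ ^ (2 * 2) = ‖z‖ ^ 2 * ‖z‖ ^ 2 := fun z => by ring
    simp_rw [h4] at this
    rw [this]
    norm_num [Nat.factorial]
    ring
  rw [step1]
  by_cases hij : i = j
  · subst hij
    have hval : ∀ k, ∫ z : ℂ, g k z = if k = i then 2 * π / c ^ 3 else π / c := by
      intro k
      rw [hg]
      by_cases hk : k = i
      · simp only [if_pos hk]
        exact hm2
      · simp only [if_neg hk, one_mul]
        exact hm0
    simp_rw [hval]
    rw [← Finset.mul_prod_erase Finset.univ _ (Finset.mem_univ i), if_pos rfl]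
    rw [Finset.prod_congr rfl (fun k hk => if_neg (Finset.ne_of_mem_erase hk)),
      Finset.prod_const, Finset.card_erase_of_mem (Finset.mem_univ i), Finset.card_univ,
      Fintype.card_fin]
    obtain ⟨m, rfl⟩ : ∃ m, n = m + 1 := ⟨n - 1, (Nat.succ_pred_eq_of_pos hn).symm⟩
    simp only [Nat.add_sub_cancel, if_pos rfl, pow_one, div_pow]
    field_simp
    ring
    simp
  · have h2n : 2 ≤ n := by
      by_contra h
      have : n ≤ 1 := by omega
      have : Subsingleton (Fin n) := Fin.subsingleton_iff_le_one.mpr this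
      exact hij (Subsingleton.elim i j)
    have hval : ∀ k, ∫ z : ℂ, g k z =
        if k = i then π / c ^ 2 else if k = j then π / c ^ 2 else π / c := by
      intro k
      rw [hg]
      by_cases hk : k = i
      · have : k ≠ j := by rw [hk]; exact hij
        simp only [if_pos hk, if_neg this, mul_one]
        exact hm1
      · by_cases hk' : k = j
        · simp only [if_neg hk, if_pos hk', one_mul]
          exact hm1
        · simp only [if_neg hk, if_neg hk', one_mul]
          exact hm0
    simp_rw [hval]
    have hjmem : j ∈ Finset.univ.erase i := Finset.mem_erase.mpr ⟨Ne.symm hij, Finset.mem_univ j⟩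
    rw [← Finset.mul_prod_erase Finset.univ _ (Finset.mem_univ i), if_pos rfl,
      ← Finset.mul_prod_erase _ _ hjmem, if_neg (Ne.symm hij), if_pos rfl]
    rw [Finset.prod_congr rfl (fun k hk => by
        rw [if_neg (Finset.ne_of_mem_erase (Finset.mem_of_mem_erase hk)),
          if_neg (Finset.ne_of_mem_erase hk)]),
      Finset.prod_const, Finset.card_erase_of_mem hjmem,
      Finset.card_erase_of_mem (Finset.mem_univ i), Finset.card_univ, Fintype.card_fin]
    obtain ⟨m, rfl⟩ : ∃ m, n = m + 2 := ⟨n - 2, by omega⟩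
    have hcard : m + 2 - 1 - 1 = m := by omega
    rw [hcard, if_neg hij]
    simp only [pow_zero, one_mul, div_pow]
    field_simp
    ring

lemma tanh_form' (x : ℝ) : Real.tanh x = (1 - Real.exp (-(2 * x))) / (1 + Real.exp (-(2 * x))) := by
  rw [Real.tanh_eq_sinh_div_cosh, Real.sinh_eq, Real.cosh_eq]
  have h1 : Real.exp x ≠ 0 := (Real.exp_pos x).ne'
  have h2 : (1 : ℝ) + Real.exp (-(2 * x)) ≠ 0 := by positivity
  have h4 : Real.exp x + Real.exp (-x) ≠ 0 := by positivity
  have hA : Real.exp (-(2 * x)) * (Real.exp x * Real.exp x) = 1 := by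
    rw [← Real.exp_add, ← Real.exp_add, show -(2*x) + (x + x) = 0 by ring, Real.exp_zero]
  have hB : Real.exp (-x) * Real.exp x = 1 := by
    rw [← Real.exp_add, show -x + x = 0 by ring, Real.exp_zero]
  have hC : Real.exp (-(2 * x)) * Real.exp x = Real.exp (-x) := by
    rw [← Real.exp_add]; ring_nf
  field_simp
  have hC' : Real.exp (-(x * 2)) * Real.exp x = Real.exp (-x) := by rw [mul_comm x 2]; exact hC
  linear_combination 2 * hC'
lemma integrand_eq (n : ℕ) (hn : 1 ≤ n) (i j : Fin n) (u : ℝ) (hu : 0 < u) (v : ℝ)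
    (hv : v ∈ Set.uIcc (0:ℝ) u) :
    (1 - Real.exp (-(4 * π * v))) ^ (-(n : ℤ)) *
      (1 - Real.exp (-(4 * π * (u - v)))) ^ (-(n : ℤ)) *
      (∫ Z : EuclideanSpace ℂ (Fin n), ‖Z i‖ ^ 2 * ‖Z j‖ ^ 2 *
        Real.exp (-((π / (2 * Real.tanh (π * (2 * v)))
          + π / (2 * Real.tanh (π * (2 * (u - v))))) * ‖Z‖ ^ 2)))
    = (2 : ℝ) ^ (if i = j then 1 else 0 : ℕ) *
        (π ^ 2 * (1 - Real.exp (-(4 * π * u))) ^ (n + 2))⁻¹ *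
        ((1 - Real.exp (-(4 * π * v))) ^ 2 * (1 - Real.exp (-(4 * π * (u - v)))) ^ 2) := by
  rw [Set.uIcc_of_le hu.le, Set.mem_Icc] at hv
  have hnz : (-(n:ℤ)) ≠ 0 := by
    simp only [ne_eq, neg_eq_zero, Nat.cast_eq_zero]
    omega
  rcases eq_or_lt_of_le hv.1 with h0 | h0
  · -- v = 0
    rw [← h0]
    simp only [mul_zero, neg_zero, Real.exp_zero, sub_self]
    rw [zero_zpow _ hnz]
    ring
  rcases eq_or_lt_of_le hv.2 with h1 | h1
  · -- v = u
    rw [h1]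
    simp only [sub_self, mul_zero, neg_zero, Real.exp_zero]
    rw [zero_zpow _ hnz]
    ring
  -- 0 < v < u
  set a := Real.exp (-(4 * π * v)) with ha
  set b := Real.exp (-(4 * π * (u - v))) with hb
  set q := Real.exp (-(4 * π * u)) with hq
  have hπ := Real.pi_pos
  have ha1 : a < 1 := by
    rw [ha]
    apply Real.exp_lt_one_iff.mpr
    nlinarith
  have hb1 : b < 1 := by
    rw [hb]
    apply Real.exp_lt_one_iff.mpr
    nlinarith
  have hq1 : q < 1 := by
    rw [hq]
    apply Real.exp_lt_one_iff.mpr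
    nlinarith
  have ha0 : 0 < a := Real.exp_pos _
  have hb0 : 0 < b := Real.exp_pos _
  have hq0 : 0 < q := Real.exp_pos _
  have hab : a * b = q := by
    rw [ha, hb, hq, ← Real.exp_add]
    congr 1
    ring
  have hta : Real.tanh (π * (2 * v)) = (1 - a) / (1 + a) := by
    rw [tanh_form' (π * (2 * v)), ha]
    congr 3 <;> ring
  have htb : Real.tanh (π * (2 * (u - v))) = (1 - b) / (1 + b) := by
    rw [tanh_form' (π * (2 * (u - v))), hb]
    congr 3 <;> ring
  have hc_eq : π / (2 * Real.tanh (π * (2 * v))) + π / (2 * Real.tanh (π * (2 * (u - v))))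
      = π * (1 - q) / ((1 - a) * (1 - b)) := by
    rw [hta, htb]
    have h1a : (1:ℝ) - a ≠ 0 := by linarith
    have h1b : (1:ℝ) - b ≠ 0 := by linarith
    have h1a' : (1:ℝ) + a ≠ 0 := by linarith
    have h1b' : (1:ℝ) + b ≠ 0 := by linarith
    field_simp
    linear_combination (-2) * hab
  rw [hc_eq]
  have hcpos : 0 < π * (1 - q) / ((1 - a) * (1 - b)) := by
    apply div_pos
    · nlinarith
    · nlinarith
  rw [inner_integral n hn i j hcpos]
  have h1a : (1:ℝ) - a ≠ 0 := by linarith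
  have h1b : (1:ℝ) - b ≠ 0 := by linarith
  have h1q : (1:ℝ) - q ≠ 0 := by linarith
  rw [zpow_neg, zpow_neg, zpow_natCast, zpow_natCast, div_pow, mul_pow, mul_pow]
  have e1 : (1 - a)^(n+2) = (1-a)^n * (1-a)^2 := pow_add _ n 2
  have e2 : (1 - b)^(n+2) = (1-b)^n * (1-b)^2 := pow_add _ n 2
  have e3 : (π:ℝ)^(n+2) = π^n * π^2 := pow_add _ n 2
  rw [e1, e2, e3]
  have hπn : (π:ℝ)^n ≠ 0 := pow_ne_zero _ Real.pi_ne_zero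
  have h1an : (1-a)^n ≠ 0 := pow_ne_zero _ h1a
  have h1bn : (1-b)^n ≠ 0 := pow_ne_zero _ h1b
  have h1qn : (1-q)^(n+2) ≠ 0 := pow_ne_zero _ h1q
  field_simp

lemma exp_deriv_aux (k x : ℝ) : HasDerivAt (fun t : ℝ => rexp (k * t)) (k * rexp (k * x)) x := by
  have := ((hasDerivAt_id x).const_mul k).exp
  simpa [mul_comm] using this

lemma outer_integral (u : ℝ) (hu : 0 < u) :
    ∫ v in (0:ℝ)..u, (1 - rexp (-(4 * π * v))) ^ 2 * (1 - rexp (-(4 * π * (u - v)))) ^ 2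
      = u * (1 + 4 * rexp (-(4 * π * u)) + rexp (-(4 * π * u)) ^ 2)
        - 3 / (4 * π) * (1 - rexp (-(4 * π * u)) ^ 2) := by
  have hπ := Real.pi_pos
  set q := rexp (-(4 * π * u)) with hq
  set Φ : ℝ → ℝ := fun v => (1 + 4 * q + q ^ 2) * v + (2 + 2 * q) / (4 * π) * rexp ((-(4 * π)) * v)
    - (2 + 2 * q) * q / (4 * π) * rexp ((4 * π) * v) - rexp ((-(8 * π)) * v) / (8 * π)
    + q ^ 2 * rexp ((8 * π) * v) / (8 * π) with hΦ
  have hderiv : ∀ v ∈ Set.uIcc (0:ℝ) u,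
      HasDerivAt Φ ((1 - rexp (-(4 * π * v))) ^ 2 * (1 - rexp (-(4 * π * (u - v)))) ^ 2) v := by
    intro v _
    have h1 := exp_deriv_aux (-(4 * π)) v
    have h2 := exp_deriv_aux (4 * π) v
    have h3 := exp_deriv_aux (-(8 * π)) v
    have h4 := exp_deriv_aux (8 * π) v
    have hd : HasDerivAt Φ
        ((1 + 4 * q + q ^ 2) + (2 + 2 * q) / (4 * π) * ((-(4 * π)) * rexp ((-(4 * π)) * v))
          - (2 + 2 * q) * q / (4 * π) * ((4 * π) * rexp ((4 * π) * v))
          - ((-(8 * π)) * rexp ((-(8 * π)) * v)) / (8 * π)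
          + q ^ 2 * ((8 * π) * rexp ((8 * π) * v)) / (8 * π)) v := by
      rw [hΦ]
      exact ((((hasDerivAt_id v).const_mul (1 + 4 * q + q ^ 2)).add
        (h1.const_mul ((2 + 2 * q) / (4 * π)))).sub
        (h2.const_mul ((2 + 2 * q) * q / (4 * π)))).sub (h3.div_const (8 * π)) |>.add
        ((h4.const_mul (q ^ 2)).div_const (8 * π)) |>.congr_deriv (by ring)
    convert hd using 1
    have hE4 : rexp ((-(4 * π)) * v) = rexp (-(4 * π * v)) := by ring_nf
    have hE4' : rexp ((4 * π) * v) * rexp (-(4 * π * v)) = 1 := by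
      rw [← Real.exp_add]; ring_nf; exact Real.exp_zero
    have hE8 : rexp ((-(8 * π)) * v) = rexp (-(4 * π * v)) * rexp (-(4 * π * v)) := by
      rw [← Real.exp_add]; ring_nf
    have hE8' : rexp ((8 * π) * v) = rexp ((4 * π) * v) * rexp ((4 * π) * v) := by
      rw [← Real.exp_add]; ring_nf
    have hbq : rexp (-(4 * π * (u - v))) = q * rexp ((4 * π) * v) := by
      rw [hq, ← Real.exp_add]; ring_nf
    rw [hbq, hE4, hE8, hE8']
    have hne : rexp (-(4 * π * v)) ≠ 0 := Real.exp_ne_zero _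
    have hEinv : rexp ((4 * π) * v) = (rexp (-(4 * π * v)))⁻¹ := by
      rw [← Real.exp_neg]; ring_nf
    rw [hEinv]
    field_simp
    ring
  have hcont : Continuous fun v : ℝ =>
      (1 - rexp (-(4 * π * v))) ^ 2 * (1 - rexp (-(4 * π * (u - v)))) ^ 2 := by
    fun_prop
  rw [intervalIntegral.integral_eq_sub_of_hasDerivAt hderiv (hcont.intervalIntegrable 0 u)]
  rw [hΦ]
  simp only []
  have hqu : rexp ((-(4 * π)) * u) = q := by rw [hq]; ring_nf
  have hqu' : rexp ((4 * π) * u) = q⁻¹ := by rw [hq, ← Real.exp_neg]; ring_nf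
  have hqu8 : rexp ((-(8 * π)) * u) = q ^ 2 := by
    rw [hq, pow_two, ← Real.exp_add]; ring_nf
  have hqu8' : rexp ((8 * π) * u) = (q ^ 2)⁻¹ := by
    rw [hq, pow_two, ← Real.exp_add, ← Real.exp_neg]; ring_nf
  rw [hqu, hqu', hqu8, hqu8']
  simp only [mul_zero, Real.exp_zero]
  have hqne : q ≠ 0 := Real.exp_ne_zero _
  field_simp
  ring

/-- Fourth-moment integral identity for the Mehler kernel:
`∫₀ᵘ (1-e^{-4πv})^{-n} (1-e^{-4π(u-v)})^{-n}
    (∫_{ℂⁿ} |Z_i|²|Z_j|² exp(-(B_{2v}+B_{2(u-v)})‖Z‖²) dZ) dv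
  = 2^{δ_{ij}} (π² (1-e^{-4πu})^{n+2})⁻¹
      (u(1 + 4e^{-4πu} + e^{-8πu}) - (3/(4π))(1-e^{-8πu}))`,
where `B_w = π/(2 tanh(π w))` and `ℂⁿ` carries the Lebesgue (Haar) measure. -/
theorem mehler_fourth_moment_integral (n : ℕ) (hn : 1 ≤ n) (i j : Fin n)
    (u : ℝ) (hu : 0 < u) :
    (∫ v in (0 : ℝ)..u,
        (1 - Real.exp (-(4 * π * v))) ^ (-(n : ℤ)) *
          (1 - Real.exp (-(4 * π * (u - v)))) ^ (-(n : ℤ)) *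
          (∫ Z : EuclideanSpace ℂ (Fin n),
            ‖Z i‖ ^ 2 * ‖Z j‖ ^ 2 *
              Real.exp (-((π / (2 * Real.tanh (π * (2 * v)))
                + π / (2 * Real.tanh (π * (2 * (u - v))))) * ‖Z‖ ^ 2))))
      = (2 : ℝ) ^ (if i = j then 1 else 0 : ℕ) *
          (π ^ 2 * (1 - Real.exp (-(4 * π * u))) ^ (n + 2))⁻¹ *
          (u * (1 + 4 * Real.exp (-(4 * π * u)) + Real.exp (-(8 * π * u)))
            - (3 / (4 * π)) * (1 - Real.exp (-(8 * π * u)))) := by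
  rw [intervalIntegral.integral_congr (g := fun v =>
      (2 : ℝ) ^ (if i = j then 1 else 0 : ℕ) *
        (π ^ 2 * (1 - Real.exp (-(4 * π * u))) ^ (n + 2))⁻¹ *
        ((1 - Real.exp (-(4 * π * v))) ^ 2 * (1 - Real.exp (-(4 * π * (u - v)))) ^ 2))
    (fun v hv => integrand_eq n hn i j u hu v hv)]
  rw [intervalIntegral.integral_const_mul, outer_integral u hu]
  have h8 : rexp (-(8 * π * u)) = rexp (-(4 * π * u)) ^ 2 := by
    rw [pow_two, ← Real.exp_add]; ring_nf
  rw [h8]
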